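/- For all x, y ∈ ℝ with cos x + cos y ≥ 0 one has 5 + cos(2x) − 2(cos x − 2)cos y ≥ 0. Consequently, for F(x) = 1 − cos x and G(y) = 1 − cos y, M(x,y) ≥ 0 for all (x,y) with 0 ≤ (1 − cos x) + (1 − cos y) ≤ 2. -/
import Mathlib


/-- The function `M(x,y)` built from `F` and `G`. -/
noncomputable def Mfun (F G : ℝ → ℝ) (x y : ℝ) : ℝ :=
  (6 * F x * (deriv (deriv F) x) ^ 2 - 3 * (deriv F x) ^ 2 * deriv (deriv F) x
      - 2 * F x * deriv F x * deriv (deriv (deriv F)) x) * G y * (deriv G y) ^ 2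
    + F x * (deriv F x) ^ 2 * deriv (deriv F) x
      * ((deriv G y) ^ 2 - 2 * G y * deriv (deriv G) y)

lemma deriv_one_sub_cos : deriv (fun x : ℝ => 1 - Real.cos x) = Real.sin := by
  funext t
  rw [deriv_const_sub, Real.deriv_cos, neg_neg]

lemma key_ineq (c d : ℝ) (h1 : c ≤ 1) (h2 : 0 ≤ c + d) :
    0 ≤ c ^ 2 - c * d + 2 * d + 2 := by
  nlinarith [sq_nonneg (c - 1), sq_nonneg c]

theorem stmt16 :
    (∀ x y : ℝ, 0 ≤ Real.cos x + Real.cos y →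
      0 ≤ 5 + Real.cos (2 * x) - 2 * (Real.cos x - 2) * Real.cos y) ∧
    (∀ x y : ℝ, 0 ≤ (1 - Real.cos x) + (1 - Real.cos y) →
      (1 - Real.cos x) + (1 - Real.cos y) ≤ 2 →
      0 ≤ Mfun (fun x => 1 - Real.cos x) (fun y => 1 - Real.cos y) x y) := by
  constructor
  · intro x y h
    have hc := Real.cos_le_one x
    have := key_ineq (Real.cos x) (Real.cos y) hc h
    rw [Real.cos_two_mul]
    nlinarith
  · intro x y _ h2
    have hcd : 0 ≤ Real.cos x + Real.cos y := by linarith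
    have hc := Real.cos_le_one x
    have hd := Real.cos_le_one y
    have key := key_ineq (Real.cos x) (Real.cos y) hc hcd
    have hsx := Real.sin_sq_add_cos_sq x
    have hsy := Real.sin_sq_add_cos_sq y
    unfold Mfun
    rw [deriv_one_sub_cos, Real.deriv_sin, Real.deriv_cos']
    set c := Real.cos x
    set d := Real.cos y
    set s := Real.sin x
    set t := Real.sin y
    have hM : (6 * (1 - c) * c ^ 2 - 3 * s ^ 2 * c
          - 2 * (1 - c) * s * (-s)) * (1 - d) * t ^ 2
        + (1 - c) * s ^ 2 * c * (t ^ 2 - 2 * (1 - d) * d)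
        = (1 - c) ^ 2 * (1 - d) ^ 2 * (c ^ 2 - c * d + 2 * d + 2) := by
      linear_combination (((1 - d) * (2 - 5 * c) + c - c ^ 2) * t ^ 2
          - 2 * (1 - c) * c * d * (1 - d)) * hsx
        + ((1 - c ^ 2) * ((1 - d) * (2 - 5 * c) + c - c ^ 2)
          + 6 * (1 - c) * c ^ 2 * (1 - d)) * hsy
    have h0 : 0 ≤ (1 - c) ^ 2 * (1 - d) ^ 2 * (c ^ 2 - c * d + 2 * d + 2) :=
      mul_nonneg (mul_nonneg (sq_nonneg _) (sq_nonneg _)) key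
    beta_reduce
    linarith [hM, h0]
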